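/- Fix d, n, m and constant matrices N_j ∈ ℝ^{n×n}, Γ_j ∈ ℝ^{m×n}, M_j ∈ ℝ^{m×m} for j = 1,…,d, and twice continuously differentiable maps Q_j : ℝⁿ → ℝⁿ with Q_j(0) = 0 and DQ_j(0) = 0; set F_j(v) = N_j v + Q_j(v). Then the following are equivalent: (1) for every twice continuously differentiable map V : ℝ^d → ℝⁿ and every x ∈ ℝ^d, Σ_{j,k=1}^d Γ_j ∂_{x_j}∂_{x_k}(F_k ∘ V)(x) = Σ_{j,k=1}^d M_j Γ_k ∂_{x_j}∂_{x_k} V(x) (the involution identity Γ 𝓕(V) = 𝓜 Γ V, where Γ = Σ_j Γ_j ∂_{x_j}, 𝓜 = Σ_j M_j ∂_{x_j}, 𝓕(V) = Σ_j ∂_{x_j} F_j(V)); (2) the algebraic relations hold: Γ_j N_j = M_j Γ_j and Γ_j Q_j ≡ 0 (as a function on ℝⁿ) for every j, and Γ_j N_k + Γ_k N_j = M_j Γ_k + M_k Γ_j and Γ_j Q_k + Γ_k Q_j ≡ 0 for every pair j ≠ k. -/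

import Mathlib

/-- Directional (partial) derivative `∂_{x_j} f` of a map `f : ℝ^d → ℝ^n`. -/
noncomputable def pd {d n : ℕ} (j : Fin d) (f : (Fin d → ℝ) → (Fin n → ℝ)) :
    (Fin d → ℝ) → (Fin n → ℝ) :=
  fun x => fderiv ℝ f x (Pi.single j 1)

/-! ### Auxiliary lemmas -/

noncomputable def mvc {m n : ℕ} (A : Matrix (Fin m) (Fin n) ℝ) :
    (Fin n → ℝ) →L[ℝ] (Fin m → ℝ) :=
  LinearMap.toContinuousLinearMap A.mulVecLin

@[simp] lemma mvc_apply {m n : ℕ} (A : Matrix (Fin m) (Fin n) ℝ) (v : Fin n → ℝ) :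
    mvc A v = A.mulVec v := rfl

lemma pd_clm {d n m : ℕ} (j : Fin d) (L : (Fin n → ℝ) →L[ℝ] (Fin m → ℝ))
    (f : (Fin d → ℝ) → (Fin n → ℝ)) (x : Fin d → ℝ) (hf : DifferentiableAt ℝ f x) :
    pd j (fun y => L (f y)) x = L (pd j f x) := by
  have h : HasFDerivAt (fun y => L (f y)) (L.comp (fderiv ℝ f x)) x :=
    (L.hasFDerivAt).comp x hf.hasFDerivAt
  unfold pd
  rw [h.fderiv]
  rfl

lemma pd_add {d n : ℕ} (j : Fin d) (f g : (Fin d → ℝ) → (Fin n → ℝ)) (x : Fin d → ℝ)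
    (hf : DifferentiableAt ℝ f x) (hg : DifferentiableAt ℝ g x) :
    pd j (fun y => f y + g y) x = pd j f x + pd j g x := by
  unfold pd
  have h : HasFDerivAt (fun y => f y + g y) (fderiv ℝ f x + fderiv ℝ g x) x :=
    hf.hasFDerivAt.add hg.hasFDerivAt
  rw [h.fderiv]
  rfl

lemma pd_pd_eq {d n : ℕ} (f : (Fin d → ℝ) → (Fin n → ℝ)) (hf : ContDiff ℝ 2 f)
    (j k : Fin d) (x : Fin d → ℝ) :
    pd j (pd k f) x = fderiv ℝ (fderiv ℝ f) x (Pi.single j 1) (Pi.single k 1) := by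
  have hdf : DifferentiableAt ℝ (fderiv ℝ f) x :=
    ((hf.fderiv_right (m := 1) (by norm_num)).differentiable one_ne_zero).differentiableAt
  have h0 := ((ContinuousLinearMap.apply ℝ (Fin n → ℝ) (Pi.single k (1:ℝ))).hasFDerivAt).comp x
      hdf.hasFDerivAt
  have h : HasFDerivAt (fun y => fderiv ℝ f y (Pi.single k (1:ℝ)))
      ((ContinuousLinearMap.apply ℝ (Fin n → ℝ) (Pi.single k (1:ℝ))).comp
        (fderiv ℝ (fderiv ℝ f) x)) x := h0
  show fderiv ℝ (fun y => fderiv ℝ f y (Pi.single k 1)) x (Pi.single j 1) = _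
  rw [h.fderiv]
  rfl

lemma pd_comm {d n : ℕ} (f : (Fin d → ℝ) → (Fin n → ℝ)) (hf : ContDiff ℝ 2 f)
    (j k : Fin d) (x : Fin d → ℝ) :
    pd j (pd k f) x = pd k (pd j f) x := by
  rw [pd_pd_eq f hf j k x, pd_pd_eq f hf k j x]
  exact (hf.contDiffAt.isSymmSndFDerivAt (by simp [minSmoothness_of_isRCLikeNormedField])) _ _

lemma pd_differentiable {d n : ℕ} (f : (Fin d → ℝ) → (Fin n → ℝ)) (hf : ContDiff ℝ 2 f)
    (k : Fin d) : Differentiable ℝ (pd k f) := by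
  have hdf : ContDiff ℝ 1 (fderiv ℝ f) := hf.fderiv_right (by norm_num)
  have : pd k f = fun x => (ContinuousLinearMap.apply ℝ (Fin n → ℝ) (Pi.single k (1:ℝ)))
      (fderiv ℝ f x) := rfl
  rw [this]
  exact (ContinuousLinearMap.differentiable _).comp
    (hdf.differentiable one_ne_zero)

lemma pd_pd_clm {d n m : ℕ} (j k : Fin d) (A : Matrix (Fin m) (Fin n) ℝ)
    (f : (Fin d → ℝ) → (Fin n → ℝ)) (hf : ContDiff ℝ 2 f) (x : Fin d → ℝ) :
    pd j (pd k (fun y => A.mulVec (f y))) x = A.mulVec (pd j (pd k f) x) := by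
  have e1 : pd k (fun y => mvc A (f y)) = fun z => mvc A (pd k f z) :=
    funext fun z => pd_clm k (mvc A) f z ((hf.differentiable (by norm_num)).differentiableAt)
  have e0 : (fun y => A.mulVec (f y)) = (fun y => mvc A (f y)) := rfl
  rw [e0, e1]
  exact pd_clm j (mvc A) (pd k f) x ((pd_differentiable f hf k) x)

lemma pd_pd_add {d n : ℕ} (j k : Fin d) (f g : (Fin d → ℝ) → (Fin n → ℝ))
    (hf : ContDiff ℝ 2 f) (hg : ContDiff ℝ 2 g) (x : Fin d → ℝ) :
    pd j (pd k (fun y => f y + g y)) x = pd j (pd k f) x + pd j (pd k g) x := by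
  have e1 : pd k (fun y => f y + g y) = fun z => pd k f z + pd k g z :=
    funext fun z => pd_add k f g z ((hf.differentiable (by norm_num)).differentiableAt)
      ((hg.differentiable (by norm_num)).differentiableAt)
  rw [e1]
  exact pd_add j (pd k f) (pd k g) x ((pd_differentiable f hf k) x)
    ((pd_differentiable g hg k) x)

/-! ### Quadratic test functions -/

/-- the linear form `x ↦ ∑ i, c i * x i` as a CLM -/
noncomputable def lc {d : ℕ} (c : Fin d → ℝ) : (Fin d → ℝ) →L[ℝ] ℝ :=
  ∑ i, c i • (ContinuousLinearMap.proj i)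

@[simp] lemma lc_single {d : ℕ} (c : Fin d → ℝ) (j : Fin d) :
    lc c (Pi.single j 1) = c j := by
  simp [lc, ContinuousLinearMap.sum_apply, Pi.single_apply, mul_ite]

@[simp] lemma lc_zero {d : ℕ} (c : Fin d → ℝ) : lc c 0 = 0 := by simp

/-- quadratic test function -/
noncomputable def Vc {d n : ℕ} (c : Fin d → ℝ) (v w : Fin n → ℝ) :
    (Fin d → ℝ) → (Fin n → ℝ) :=
  fun x => v + (lc c x * lc c x) • w

lemma Vc_contDiff {d n : ℕ} (c : Fin d → ℝ) (v w : Fin n → ℝ) :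
    ContDiff ℝ 2 (Vc c v w) :=
  contDiff_const.add (((lc c).contDiff.mul (lc c).contDiff).smul contDiff_const)

lemma Vc_hasFDerivAt {d n : ℕ} (c : Fin d → ℝ) (v w : Fin n → ℝ) (x : Fin d → ℝ) :
    HasFDerivAt (Vc c v w) (((lc c x • lc c) + (lc c x • lc c)).smulRight w) x := by
  have h1 : HasFDerivAt (fun y => lc c y * lc c y)
      ((lc c x • lc c) + (lc c x • lc c)) x :=
    (lc c).hasFDerivAt.mul (lc c).hasFDerivAt
  have h2 := (hasFDerivAt_const v x).add (h1.smul_const w)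
  rw [zero_add] at h2
  exact h2

@[simp] lemma Vc_zero {d n : ℕ} (c : Fin d → ℝ) (v w : Fin n → ℝ) : Vc c v w 0 = v := by
  simp [Vc]

lemma Vc_differentiable {d n : ℕ} (c : Fin d → ℝ) (v w : Fin n → ℝ) :
    Differentiable ℝ (Vc c v w) :=
  (Vc_contDiff c v w).differentiable (by norm_num)

lemma pd_comp_Vc {d n : ℕ} (c : Fin d → ℝ) (v w : Fin n → ℝ) (k : Fin d)
    (G : (Fin n → ℝ) → (Fin n → ℝ)) (hG : ContDiff ℝ 2 G) (x : Fin d → ℝ) :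
    pd k (fun y => G (Vc c v w y)) x
      = (2 * c k * lc c x) • fderiv ℝ G (Vc c v w x) w := by
  have hG' : DifferentiableAt ℝ G (Vc c v w x) :=
    (hG.differentiable (by norm_num)).differentiableAt
  have h : HasFDerivAt (fun y => G (Vc c v w y))
      ((fderiv ℝ G (Vc c v w x)).comp
        (((lc c x • lc c) + (lc c x • lc c)).smulRight w)) x :=
    hG'.hasFDerivAt.comp x (Vc_hasFDerivAt c v w x)
  unfold pd
  rw [h.fderiv]
  have h2 : (((lc c x • lc c) + (lc c x • lc c)).smulRight w) (Pi.single k 1)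
      = (2 * c k * lc c x) • w := by
    have : lc c x * c k + lc c x * c k = 2 * c k * lc c x := by ring
    simp [add_smul, ← this, add_mul]
  simp only [ContinuousLinearMap.comp_apply, h2]
  exact ContinuousLinearMap.map_smul _ _ _

lemma key {d n : ℕ} (c : Fin d → ℝ) (v w : Fin n → ℝ) (j k : Fin d)
    (G : (Fin n → ℝ) → (Fin n → ℝ)) (hG : ContDiff ℝ 2 G) :
    pd j (pd k (fun y => G (Vc c v w y))) 0 = (2 * c j * c k) • fderiv ℝ G v w := by
  have hpdk : pd k (fun y => G (Vc c v w y))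
      = fun x => (2 * c k * lc c x) • fderiv ℝ G (Vc c v w x) w :=
    funext (fun x => pd_comp_Vc c v w k G hG x)
  rw [hpdk]
  have hφ : HasFDerivAt (fun x : Fin d → ℝ => 2 * c k * lc c x)
      ((2 * c k) • lc c) 0 := (lc c).hasFDerivAt.const_mul (2 * c k)
  have hH : DifferentiableAt ℝ
      (fun x : Fin d → ℝ => fderiv ℝ G (Vc c v w x) w) 0 := by
    have h1 : ContDiff ℝ 1 (fderiv ℝ G) := hG.fderiv_right (by norm_num)
    exact (ContinuousLinearMap.apply ℝ (Fin n → ℝ) w).differentiable.differentiableAt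
      |>.comp 0 (((h1.differentiable one_ne_zero).differentiableAt).comp 0
        (Vc_differentiable c v w).differentiableAt)
  have h := hφ.smul hH.hasFDerivAt
  unfold pd
  rw [HasFDerivAt.fderiv (f := fun x => (2 * c k * lc c x) • fderiv ℝ G (Vc c v w x) w) h]
  have h0 : (2 * c k * lc c (0 : Fin d → ℝ)) = 0 := by simp
  rw [h0]
  simp only [zero_smul, ContinuousLinearMap.zero_apply, zero_add,
    ContinuousLinearMap.add_apply, ContinuousLinearMap.smulRight_apply,
    ContinuousLinearMap.smul_apply, lc_single, Vc_zero, smul_smul]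
  congr 1
  simp only [smul_eq_mul]
  ring

lemma sum_single_smul {d : ℕ} {X : Type*} [AddCommMonoid X] [Module ℝ X]
    (a : Fin d) (Z : Fin d → X) :
    ∑ j, (Pi.single a 1 : Fin d → ℝ) j • Z j = Z a := by
  have h : ∀ j, (Pi.single a 1 : Fin d → ℝ) j • Z j = if j = a then Z j else 0 := by
    intro j; by_cases h : j = a <;> simp [Pi.single_apply, h]
  simp [h]

lemma mulVec_ext {m n : ℕ} {A B : Matrix (Fin m) (Fin n) ℝ}
    (h : ∀ v, A.mulVec v = B.mulVec v) : A = B := by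
  ext i j'
  have := congrFun (h (Pi.single j' 1)) i
  simpa [Matrix.mulVec_single] using this

/-- Lemma 2.5: characterization of Dafermos' involution condition by algebraic relations.
With fluxes `F_j(v) = N_j v + Q_j(v)` (`Q_j(0) = 0`, `DQ_j(0) = 0`), the involution identity
`Γ 𝓕(V) = 𝓜 Γ V`, i.e.
`Σ_{j,k} Γ_j ∂_{x_j}∂_{x_k}(F_k ∘ V) = Σ_{j,k} M_j Γ_k ∂_{x_j}∂_{x_k} V` for every `C²` map `V`,
holds if and only if the algebraic relations `Γ_j N_j = M_j Γ_j`, `Γ_j Q_j ≡ 0`,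
`Γ_j N_k + Γ_k N_j = M_j Γ_k + M_k Γ_j` and `Γ_j Q_k + Γ_k Q_j ≡ 0` (for `j ≠ k`) hold. -/
theorem involution_iff_algebraic_relations {d n m : ℕ}
    (N : Fin d → Matrix (Fin n) (Fin n) ℝ)
    (Γ : Fin d → Matrix (Fin m) (Fin n) ℝ)
    (M : Fin d → Matrix (Fin m) (Fin m) ℝ)
    (Q : Fin d → (Fin n → ℝ) → (Fin n → ℝ))
    (hQsmooth : ∀ j, ContDiff ℝ 2 (Q j))
    (hQ0 : ∀ j, Q j 0 = 0)
    (hDQ0 : ∀ j, fderiv ℝ (Q j) 0 = 0)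
    (F : Fin d → (Fin n → ℝ) → (Fin n → ℝ))
    (hF : ∀ j v, F j v = (N j).mulVec v + Q j v) :
    (∀ (V : (Fin d → ℝ) → (Fin n → ℝ)), ContDiff ℝ 2 V →
        ∀ x : Fin d → ℝ,
          ∑ j, ∑ k, (Γ j).mulVec (pd j (pd k (fun y => F k (V y))) x)
            = ∑ j, ∑ k, (M j * Γ k).mulVec (pd j (pd k V) x))
      ↔
      ((∀ j, Γ j * N j = M j * Γ j) ∧
       (∀ j, ∀ v, (Γ j).mulVec (Q j v) = 0) ∧
       (∀ j k, j ≠ k → Γ j * N k + Γ k * N j = M j * Γ k + M k * Γ j) ∧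
       (∀ j k, j ≠ k → ∀ v, (Γ j).mulVec (Q k v) + (Γ k).mulVec (Q j v) = 0)) := by
  have hFeq : ∀ k, F k = fun u => mvc (N k) u + Q k u :=
    fun k => funext (fun u => by simp [hF k u])
  have hFs : ∀ k, ContDiff ℝ 2 (F k) := by
    intro k
    rw [hFeq k]
    exact ((mvc (N k)).contDiff).add (hQsmooth k)
  have hDF : ∀ k (v u : Fin n → ℝ),
      fderiv ℝ (F k) v u = (N k).mulVec u + fderiv ℝ (Q k) v u := by
    intro k v u
    have hQd : DifferentiableAt ℝ (Q k) v :=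
      ((hQsmooth k).differentiable (by norm_num)).differentiableAt
    have h : HasFDerivAt (F k) (mvc (N k) + fderiv ℝ (Q k) v) v := by
      rw [hFeq k]
      exact (mvc (N k)).hasFDerivAt.add hQd.hasFDerivAt
    rw [h.fderiv]
    simp [ContinuousLinearMap.add_apply]
  constructor
  · -- involution identity ⟹ algebraic relations
    intro hyp
    have main : ∀ (c : Fin d → ℝ) (v u : Fin n → ℝ),
        ∑ j, c j • ∑ k, c k • (Γ j).mulVec (fderiv ℝ (F k) v u)
          = ∑ j, c j • ∑ k, c k • (M j * Γ k).mulVec u := by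
      intro c v u
      have h0 := hyp (Vc c v u) (Vc_contDiff c v u) 0
      have hL : ∀ j k : Fin d,
          (Γ j).mulVec (pd j (pd k (fun y => F k (Vc c v u y))) 0)
            = (2:ℝ) • (c j • (c k • (Γ j).mulVec (fderiv ℝ (F k) v u))) := by
        intro j k
        rw [key c v u j k (F k) (hFs k), Matrix.mulVec_smul, smul_smul, smul_smul]
      have hR : ∀ j k : Fin d,
          (M j * Γ k).mulVec (pd j (pd k (Vc c v u)) 0)
            = (2:ℝ) • (c j • (c k • (M j * Γ k).mulVec u)) := by
        intro j k
        have hid : pd j (pd k (Vc c v u)) 0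
            = (2 * c j * c k) • fderiv ℝ (fun z : Fin n → ℝ => z) v u :=
          key c v u j k (fun z => z) contDiff_id
        rw [hid, fderiv_id']
        rw [ContinuousLinearMap.id_apply, Matrix.mulVec_smul, smul_smul, smul_smul]
      simp only [hL, hR, ← Finset.smul_sum] at h0
      exact smul_right_injective (Fin m → ℝ) (by norm_num : (2:ℝ) ≠ 0) h0
    have diag : ∀ (a : Fin d) (v u : Fin n → ℝ),
        (Γ a).mulVec (fderiv ℝ (F a) v u) = (M a * Γ a).mulVec u := by
      intro a v u
      have h := main (Pi.single a 1) v u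
      simpa [sum_single_smul] using h
    have cross : ∀ a b, a ≠ b → ∀ (v u : Fin n → ℝ),
        (Γ a).mulVec (fderiv ℝ (F b) v u) + (Γ b).mulVec (fderiv ℝ (F a) v u)
          = (M a * Γ b).mulVec u + (M b * Γ a).mulVec u := by
      intro a b hab v u
      have h := main (Pi.single a 1 + Pi.single b 1) v u
      simp only [Pi.add_apply, add_smul, Finset.sum_add_distrib, sum_single_smul,
        smul_add] at h
      funext i
      have hi := congrFun h i
      have dai := congrFun (diag a v u) i
      have dbi := congrFun (diag b v u) i
      simp only [Pi.add_apply] at hi ⊢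
      linarith
    have relDQ : ∀ a (v u : Fin n → ℝ), (Γ a).mulVec (fderiv ℝ (Q a) v u) = 0 := by
      intro a v u
      have h1 := diag a v u
      have h2 := diag a 0 u
      rw [hDF] at h1
      rw [hDF, hDQ0 a] at h2
      simp only [ContinuousLinearMap.zero_apply, add_zero] at h2
      rw [Matrix.mulVec_add, h2] at h1
      exact add_eq_left.mp h1
    have crossDQ : ∀ a b, a ≠ b → ∀ (v u : Fin n → ℝ),
        (Γ a).mulVec (fderiv ℝ (Q b) v u) + (Γ b).mulVec (fderiv ℝ (Q a) v u) = 0 := by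
      intro a b hab v u
      have h1 := cross a b hab v u
      have h2 := cross a b hab 0 u
      rw [hDF, hDF] at h1
      rw [hDF, hDF, hDQ0 a, hDQ0 b] at h2
      simp only [ContinuousLinearMap.zero_apply, add_zero] at h2
      rw [Matrix.mulVec_add, Matrix.mulVec_add] at h1
      funext i
      have h1i := congrFun h1 i
      have h2i := congrFun h2 i
      simp only [Pi.add_apply, Pi.zero_apply] at h1i h2i ⊢
      linarith
    refine ⟨?_, ?_, ?_, ?_⟩
    · -- Γ a * N a = M a * Γ a
      intro a
      apply mulVec_ext
      intro u
      have h2 := diag a 0 u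
      rw [hDF, hDQ0 a] at h2
      simp only [ContinuousLinearMap.zero_apply, add_zero] at h2
      simp only [← Matrix.mulVec_mulVec] at h2 ⊢
      exact h2
    · -- Γ a Q a = 0
      intro a v
      have hdiff : Differentiable ℝ (fun y => mvc (Γ a) (Q a y)) :=
        (mvc (Γ a)).differentiable.comp ((hQsmooth a).differentiable (by norm_num))
      have hzero : ∀ z, fderiv ℝ (fun y => mvc (Γ a) (Q a y)) z = 0 := by
        intro z
        have hQd : DifferentiableAt ℝ (Q a) z :=
          ((hQsmooth a).differentiable (by norm_num)).differentiableAt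
        have h : HasFDerivAt (fun y => mvc (Γ a) (Q a y))
            ((mvc (Γ a)).comp (fderiv ℝ (Q a) z)) z :=
          ((mvc (Γ a)).hasFDerivAt).comp z hQd.hasFDerivAt
        rw [h.fderiv]
        refine ContinuousLinearMap.ext fun u => ?_
        simp only [ContinuousLinearMap.comp_apply, ContinuousLinearMap.zero_apply, mvc_apply]
        exact relDQ a z u
      have h := is_const_of_fderiv_eq_zero hdiff hzero v 0
      simpa [hQ0 a] using h
    · -- mixed linear relation
      intro a b hab
      apply mulVec_ext
      intro u
      have h2 := cross a b hab 0 u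
      rw [hDF, hDF, hDQ0 a, hDQ0 b] at h2
      simp only [ContinuousLinearMap.zero_apply, add_zero] at h2
      simp only [Matrix.add_mulVec, ← Matrix.mulVec_mulVec] at h2 ⊢
      exact h2
    · -- mixed nonlinear relation
      intro a b hab v
      have hdiff : Differentiable ℝ (fun y => mvc (Γ a) (Q b y) + mvc (Γ b) (Q a y)) :=
        ((mvc (Γ a)).differentiable.comp ((hQsmooth b).differentiable (by norm_num))).add
          ((mvc (Γ b)).differentiable.comp ((hQsmooth a).differentiable (by norm_num)))
      have hzero : ∀ z, fderiv ℝ (fun y => mvc (Γ a) (Q b y) + mvc (Γ b) (Q a y)) z = 0 := by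
        intro z
        have hQdb : DifferentiableAt ℝ (Q b) z :=
          ((hQsmooth b).differentiable (by norm_num)).differentiableAt
        have hQda : DifferentiableAt ℝ (Q a) z :=
          ((hQsmooth a).differentiable (by norm_num)).differentiableAt
        have h : HasFDerivAt (fun y => mvc (Γ a) (Q b y) + mvc (Γ b) (Q a y))
            ((mvc (Γ a)).comp (fderiv ℝ (Q b) z) + (mvc (Γ b)).comp (fderiv ℝ (Q a) z)) z :=
          (((mvc (Γ a)).hasFDerivAt).comp z hQdb.hasFDerivAt).add
            (((mvc (Γ b)).hasFDerivAt).comp z hQda.hasFDerivAt)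
        rw [h.fderiv]
        refine ContinuousLinearMap.ext fun u => ?_
        simp only [ContinuousLinearMap.comp_apply, ContinuousLinearMap.zero_apply,
          ContinuousLinearMap.add_apply, mvc_apply]
        exact crossDQ a b hab z u
      have h := is_const_of_fderiv_eq_zero hdiff hzero v 0
      simpa [hQ0 a, hQ0 b] using h
  · -- algebraic relations ⟹ involution identity
    rintro ⟨r1, r2, r3, r4⟩ V hV x
    have hsum : ∀ j k : Fin d,
        (fun u => (Γ j).mulVec (F k u) + (Γ k).mulVec (F j u))
          = fun u => ((M j * Γ k) + (M k * Γ j)).mulVec u := by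
      intro j k
      funext u
      funext i
      rcases eq_or_ne j k with rfl | hjk
      · have hr1 := congrFun (congrArg
          (fun A : Matrix (Fin m) (Fin n) ℝ => A.mulVec u) (r1 j)) i
        have hr2 := congrFun (r2 j u) i
        simp only [hF, Matrix.mulVec_add, ← Matrix.mulVec_mulVec, Pi.add_apply,
          Matrix.add_mulVec, Pi.zero_apply] at hr1 hr2 ⊢
        linarith
      · have hr3 := congrFun (congrArg
          (fun A : Matrix (Fin m) (Fin n) ℝ => A.mulVec u) (r3 j k hjk)) i
        have hr4 := congrFun (r4 j k hjk u) i
        simp only [hF, Matrix.mulVec_add, ← Matrix.mulVec_mulVec, Pi.add_apply,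
          Matrix.add_mulVec, Pi.zero_apply] at hr3 hr4 ⊢
        linarith
    have hVC2 : ∀ j k : Fin d, ContDiff ℝ 2 (fun y => (Γ j).mulVec (F k (V y))) := by
      intro j k
      exact (mvc (Γ j)).contDiff.comp ((hFs k).comp hV)
    have T : ∀ j k : Fin d,
        pd j (pd k (fun y => (Γ j).mulVec (F k (V y)))) x
          + pd j (pd k (fun y => (Γ k).mulVec (F j (V y)))) x
        = (M j * Γ k).mulVec (pd j (pd k V) x) + (M k * Γ j).mulVec (pd j (pd k V) x) := by
      intro j k
      have e : (fun y => (Γ j).mulVec (F k (V y)) + (Γ k).mulVec (F j (V y)))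
          = fun y => ((M j * Γ k) + (M k * Γ j)).mulVec (V y) :=
        funext fun y => congrFun (hsum j k) (V y)
      calc pd j (pd k (fun y => (Γ j).mulVec (F k (V y)))) x
            + pd j (pd k (fun y => (Γ k).mulVec (F j (V y)))) x
          = pd j (pd k (fun y => (Γ j).mulVec (F k (V y)) + (Γ k).mulVec (F j (V y)))) x :=
            (pd_pd_add j k _ _ (hVC2 j k) (hVC2 k j) x).symm
        _ = pd j (pd k (fun y => ((M j * Γ k) + (M k * Γ j)).mulVec (V y))) x := by rw [e]
        _ = ((M j * Γ k) + (M k * Γ j)).mulVec (pd j (pd k V) x) :=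
            pd_pd_clm j k _ V hV x
        _ = (M j * Γ k).mulVec (pd j (pd k V) x) + (M k * Γ j).mulVec (pd j (pd k V) x) :=
            Matrix.add_mulVec _ _ _
    have hGF : ∀ j k : Fin d,
        (Γ j).mulVec (pd j (pd k (fun y => F k (V y))) x)
          = pd j (pd k (fun y => (Γ j).mulVec (F k (V y)))) x := by
      intro j k
      exact (pd_pd_clm j k (Γ j) (fun y => F k (V y)) ((hFs k).comp hV) x).symm
    have swap1 : ∑ j, ∑ k, pd j (pd k (fun y => (Γ j).mulVec (F k (V y)))) x
        = ∑ j, ∑ k, pd j (pd k (fun y => (Γ k).mulVec (F j (V y)))) x := by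
      rw [Finset.sum_comm]
      exact Finset.sum_congr rfl fun j _ => Finset.sum_congr rfl fun k _ =>
        (pd_comm _ (hVC2 k j) j k x).symm
    have swap2 : ∑ j, ∑ k, (M k * Γ j).mulVec (pd j (pd k V) x)
        = ∑ j, ∑ k, (M j * Γ k).mulVec (pd j (pd k V) x) := by
      rw [Finset.sum_comm]
      exact Finset.sum_congr rfl fun j _ => Finset.sum_congr rfl fun k _ => by
        rw [pd_comm V hV j k x]
    have double :
        (∑ j, ∑ k, pd j (pd k (fun y => (Γ j).mulVec (F k (V y)))) x)
          + (∑ j, ∑ k, pd j (pd k (fun y => (Γ j).mulVec (F k (V y)))) x)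
        = (∑ j, ∑ k, (M j * Γ k).mulVec (pd j (pd k V) x))
          + (∑ j, ∑ k, (M j * Γ k).mulVec (pd j (pd k V) x)) := by
      nth_rewrite 2 [swap1]
      simp only [← Finset.sum_add_distrib]
      calc ∑ j, ∑ k, (pd j (pd k (fun y => (Γ j).mulVec (F k (V y)))) x
              + pd j (pd k (fun y => (Γ k).mulVec (F j (V y)))) x)
          = ∑ j, ∑ k, ((M j * Γ k).mulVec (pd j (pd k V) x)
              + (M k * Γ j).mulVec (pd j (pd k V) x)) :=
            Finset.sum_congr rfl fun j _ => Finset.sum_congr rfl fun k _ => T j k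
        _ = (∑ j, ∑ k, (M j * Γ k).mulVec (pd j (pd k V) x))
              + (∑ j, ∑ k, (M k * Γ j).mulVec (pd j (pd k V) x)) := by
            simp only [Finset.sum_add_distrib]
        _ = ∑ j, ∑ k, ((M j * Γ k).mulVec (pd j (pd k V) x)
              + (M j * Γ k).mulVec (pd j (pd k V) x)) := by
            rw [swap2]
            simp only [← Finset.sum_add_distrib]
    have hstep : ∑ j, ∑ k, (Γ j).mulVec (pd j (pd k (fun y => F k (V y))) x)
        = ∑ j, ∑ k, pd j (pd k (fun y => (Γ j).mulVec (F k (V y)))) x :=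
      Finset.sum_congr rfl fun j _ => Finset.sum_congr rfl fun k _ => hGF j k
    rw [hstep]
    have h2 : (2:ℝ) • (∑ j, ∑ k, pd j (pd k (fun y => (Γ j).mulVec (F k (V y)))) x)
        = (2:ℝ) • (∑ j, ∑ k, (M j * Γ k).mulVec (pd j (pd k V) x)) := by
      rw [two_smul, two_smul]
      exact double
    exact smul_right_injective (Fin m → ℝ) (by norm_num : (2:ℝ) ≠ 0) h2
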